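/- (Maximizer normalization.) Suppose the multiplicities satisfy Σ_{j=1}^k λ_j > n. If w ∈ (0,1]^k has maximal component m = max_j w_j with m < 1, then rescaling by c = 1/m strictly increases the log-likelihood: l(w/m, θ, σ²) > l(w, θ, σ²) for every θ ∈ ℝ and σ² ≥ 0. Consequently, any maximizer of l over (0,1]^k × ℝ × [0,∞) has its largest weight component equal to 1. -/
import Mathlib


open MeasureTheory Real Set Filter Topology

/-- Standard normal density. -/
noncomputable def stdPhi (z : ℝ) : ℝ := (Real.sqrt (2 * Real.pi))⁻¹ * Real.exp (-z ^ 2 / 2)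

/-- `η_i = √(u_i² + σ²)`. -/
noncomputable def etaFn (u sigma2 : ℝ) : ℝ := Real.sqrt (u ^ 2 + sigma2)

/-- The cell probability `H`: Gaussian `N(θ, η²)` integral over the annulus
`{y : b ≤ |y| < b'}`, with (possibly infinite) extended-real thresholds. -/
noncomputable def cellH (b b' : EReal) (u θ sigma2 : ℝ) : ℝ :=
  ∫ x in {x : ℝ | b ≤ ((|x| : ℝ) : EReal) ∧ ((|x| : ℝ) : EReal) < b'},
    (etaFn u sigma2)⁻¹ * stdPhi ((x - θ) / etaFn u sigma2)

/-- The log-likelihood `l(w, θ, σ²)` of Dear–Begg selection models. For study `i`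
the thresholds on the outcome scale are `b i 0 = 0 ≤ b i 1 ≤ … ≤ b i k = ∞`. -/
noncomputable def loglik {n k : ℕ} (y u : Fin n → ℝ) (lam : Fin k → ℝ)
    (b : Fin n → ℕ → EReal) (w : Fin k → ℝ) (θ sigma2 : ℝ) : ℝ :=
  -((n : ℝ) / 2) * Real.log (2 * Real.pi)
    + ∑ j, lam j * Real.log (w j)
    - ∑ i, Real.log (etaFn (u i) sigma2)
    - (1 / 2) * ∑ i, ((y i - θ) / etaFn (u i) sigma2) ^ 2
    - ∑ i, Real.log (∑ j : Fin k, w j * cellH (b i (j : ℕ)) (b i ((j : ℕ) + 1)) (u i) θ sigma2)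

lemma etaFn_pos {u sigma2 : ℝ} (hu : 0 < u) (hs : 0 ≤ sigma2) : 0 < etaFn u sigma2 :=
  Real.sqrt_pos.2 (by positivity)

lemma density_pos {u sigma2 : ℝ} (hu : 0 < u) (hs : 0 ≤ sigma2) (θ x : ℝ) :
    0 < (etaFn u sigma2)⁻¹ * stdPhi ((x - θ) / etaFn u sigma2) := by
  have h := etaFn_pos hu hs
  unfold stdPhi
  have h2 : 0 < Real.sqrt (2 * Real.pi) := Real.sqrt_pos.2 (by positivity)
  positivity

lemma density_integrable {u sigma2 : ℝ} (hu : 0 < u) (hs : 0 ≤ sigma2) (θ : ℝ) :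
    Integrable (fun x : ℝ => (etaFn u sigma2)⁻¹ * stdPhi ((x - θ) / etaFn u sigma2)) := by
  have h := etaFn_pos hu hs
  have h1 : Integrable (fun x : ℝ => Real.exp (-(1 / (2 * etaFn u sigma2 ^ 2)) * x ^ 2)) :=
    integrable_exp_neg_mul_sq (by positivity)
  have h2 := (h1.comp_sub_right θ).const_mul ((etaFn u sigma2)⁻¹ * (Real.sqrt (2 * Real.pi))⁻¹)
  refine h2.congr (Filter.Eventually.of_forall fun x => ?_)
  unfold stdPhi
  simp only []
  rw [div_pow, show -((x - θ) ^ 2 / etaFn u sigma2 ^ 2) / 2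
      = -(1 / (2 * etaFn u sigma2 ^ 2)) * (x - θ) ^ 2 by ring]
  ring

lemma cellH_nonneg {u sigma2 : ℝ} (hu : 0 < u) (hs : 0 ≤ sigma2) (b b' : EReal) (θ : ℝ) :
    0 ≤ cellH b b' u θ sigma2 :=
  integral_nonneg fun x => (density_pos hu hs θ x).le

lemma sum_cell_pos {k : ℕ} (hk : 1 ≤ k) (w : Fin k → ℝ) (hw : ∀ j, 0 < w j)
    {u θ sigma2 : ℝ} (hu : 0 < u) (hs : 0 ≤ sigma2) (bi : ℕ → EReal)
    (hb0 : bi 0 = 0) (hbk : bi k = ⊤) (hmono : Monotone bi)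
    (hlt : ∀ j, j < k → bi j ≠ ⊤) :
    0 < ∑ j : Fin k, w j * cellH (bi (j : ℕ)) (bi ((j : ℕ) + 1)) u θ sigma2 := by
  have hj0 : k - 1 < k := by omega
  refine Finset.sum_pos' (fun j _ => mul_nonneg (hw j).le (cellH_nonneg hu hs _ _ θ))
    ⟨⟨k - 1, hj0⟩, Finset.mem_univ _, ?_⟩
  refine mul_pos (hw _) ?_
  have hne_top : bi (k - 1) ≠ ⊤ := hlt (k - 1) hj0
  have h0le : (0 : EReal) ≤ bi (k - 1) := hb0 ▸ hmono (Nat.zero_le _)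
  have hne_bot : bi (k - 1) ≠ ⊥ := fun h => by rw [h] at h0le; exact absurd h0le (by simp)
  set c := (bi (k - 1)).toReal with hc
  have hco : ((c : ℝ) : EReal) = bi (k - 1) := EReal.coe_toReal hne_top hne_bot
  have hk1 : (k - 1 : ℕ) + 1 = k := by omega
  unfold cellH
  set f : ℝ → ℝ := fun x => (etaFn u sigma2)⁻¹ * stdPhi ((x - θ) / etaFn u sigma2) with hf
  set s : Set ℝ := {x : ℝ | bi (k - 1) ≤ ((|x| : ℝ) : EReal) ∧ ((|x| : ℝ) : EReal) < bi ((k - 1) + 1)}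
  have hsub : Ici (|c| + 1) ⊆ s := by
    intro x hx
    have hx1 : |c| + 1 ≤ x := hx
    have hxpos : 0 < x := by
      have := abs_nonneg c; linarith
    have hax : |x| = x := abs_of_pos hxpos
    constructor
    · rw [← hco, hax, EReal.coe_le_coe_iff]
      have := le_abs_self c; linarith
    · rw [hk1, hbk]; exact EReal.coe_lt_top _
  have hint : IntegrableOn f s := (density_integrable hu hs θ).integrableOn
  rw [setIntegral_pos_iff_support_of_nonneg_ae
      (Filter.Eventually.of_forall fun x => (density_pos hu hs θ x).le) hint]
  have hsupp : Ici (|c| + 1) ⊆ Function.support f ∩ s :=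
    fun x hx => ⟨(density_pos hu hs θ x).ne', hsub hx⟩
  calc (0 : ENNReal) < ⊤ := by simp
    _ = volume (Ici (|c| + 1)) := (Real.volume_Ici).symm
    _ ≤ volume (Function.support f ∩ s) := measure_mono hsupp

lemma loglik_scale {n k : ℕ} (y u : Fin n → ℝ) (lam : Fin k → ℝ)
    (b : Fin n → ℕ → EReal) (w : Fin k → ℝ) (θ sigma2 m : ℝ)
    (hw : ∀ j, 0 < w j) (hm : 0 < m)
    (hA : ∀ i, 0 < ∑ j : Fin k, w j * cellH (b i (j : ℕ)) (b i ((j : ℕ) + 1)) (u i) θ sigma2) :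
    loglik y u lam b (fun j => w j / m) θ sigma2
      = loglik y u lam b w θ sigma2 + ((n : ℝ) - ∑ j, lam j) * Real.log m := by
  have h1 : ∑ j, lam j * Real.log (w j / m)
      = ∑ j, lam j * Real.log (w j) - (∑ j, lam j) * Real.log m := by
    calc ∑ j, lam j * Real.log (w j / m)
        = ∑ j, (lam j * Real.log (w j) - lam j * Real.log m) := by
          refine Finset.sum_congr rfl fun j _ => ?_
          rw [Real.log_div (hw j).ne' hm.ne']; ring
      _ = ∑ j, lam j * Real.log (w j) - (∑ j, lam j) * Real.log m := by
          rw [Finset.sum_sub_distrib, Finset.sum_mul]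
  have h2 : ∀ i : Fin n,
      Real.log (∑ j : Fin k, (w j / m) * cellH (b i (j : ℕ)) (b i ((j : ℕ) + 1)) (u i) θ sigma2)
      = Real.log (∑ j : Fin k, w j * cellH (b i (j : ℕ)) (b i ((j : ℕ) + 1)) (u i) θ sigma2)
        - Real.log m := by
    intro i
    rw [show (∑ j : Fin k, (w j / m) * cellH (b i (j : ℕ)) (b i ((j : ℕ) + 1)) (u i) θ sigma2)
        = (∑ j : Fin k, w j * cellH (b i (j : ℕ)) (b i ((j : ℕ) + 1)) (u i) θ sigma2) / m by
      rw [Finset.sum_div]; exact Finset.sum_congr rfl fun j _ => by ring]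
    rw [Real.log_div (hA i).ne' hm.ne']
  have h3 : ∑ i, Real.log
        (∑ j : Fin k, (w j / m) * cellH (b i (j : ℕ)) (b i ((j : ℕ) + 1)) (u i) θ sigma2)
      = (∑ i, Real.log
          (∑ j : Fin k, w j * cellH (b i (j : ℕ)) (b i ((j : ℕ) + 1)) (u i) θ sigma2))
        - (n : ℝ) * Real.log m := by
    rw [Finset.sum_congr rfl fun i _ => h2 i, Finset.sum_sub_distrib, Finset.sum_const,
      Finset.card_univ, Fintype.card_fin, nsmul_eq_mul]
  unfold loglik
  rw [h1, h3]
  ring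

/-- maximizer normalization: if `Σ_j λ_j > n`, then rescaling a
weight vector `w ∈ (0,1]^k` whose maximal component `m` satisfies `m < 1` by
`1/m` strictly increases the log-likelihood; consequently, any maximizer of `l`
over `(0,1]^k × ℝ × [0,∞)` has its largest weight component equal to `1`. -/
theorem loglik_maximizer_normalization
    {n k : ℕ} (hn : 1 ≤ n) (hk : 1 ≤ k)
    (y u : Fin n → ℝ) (hu : ∀ i, 0 < u i)
    (lam : Fin k → ℝ) (hlam : ∀ j, 0 < lam j)
    (hsum : (n : ℝ) < ∑ j, lam j)
    (b : Fin n → ℕ → EReal)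
    (hb0 : ∀ i, b i 0 = 0) (hbk : ∀ i, b i k = ⊤)
    (hbmono : ∀ i, Monotone (b i))
    (hblt : ∀ i, ∀ j, j < k → b i j ≠ ⊤) :
    (∀ (w : Fin k → ℝ) (θ sigma2 m : ℝ),
      (∀ j, 0 < w j ∧ w j ≤ 1) → 0 ≤ sigma2 →
      (∀ j, w j ≤ m) → (∃ j, w j = m) → m < 1 →
        loglik y u lam b w θ sigma2 < loglik y u lam b (fun j => w j / m) θ sigma2) ∧
    (∀ (w : Fin k → ℝ) (θ sigma2 : ℝ),
      (∀ j, 0 < w j ∧ w j ≤ 1) → 0 ≤ sigma2 →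
      (∀ (w' : Fin k → ℝ) (θ' sigma2' : ℝ),
        (∀ j, 0 < w' j ∧ w' j ≤ 1) → 0 ≤ sigma2' →
          loglik y u lam b w' θ' sigma2' ≤ loglik y u lam b w θ sigma2) →
      ∃ j, w j = 1) := by
  have part1 : ∀ (w : Fin k → ℝ) (θ sigma2 m : ℝ),
      (∀ j, 0 < w j ∧ w j ≤ 1) → 0 ≤ sigma2 →
      (∀ j, w j ≤ m) → (∃ j, w j = m) → m < 1 →
        loglik y u lam b w θ sigma2 < loglik y u lam b (fun j => w j / m) θ sigma2 := by
    intro w θ sigma2 m hw hs hle hex hm1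
    obtain ⟨j0, hj0⟩ := hex
    have hm0 : 0 < m := hj0 ▸ (hw j0).1
    have hA : ∀ i, 0 < ∑ j : Fin k,
        w j * cellH (b i (j : ℕ)) (b i ((j : ℕ) + 1)) (u i) θ sigma2 := fun i =>
      sum_cell_pos hk w (fun j => (hw j).1) (hu i) hs (b i) (hb0 i) (hbk i) (hbmono i)
        (fun j hj => hblt i j hj)
    rw [loglik_scale y u lam b w θ sigma2 m (fun j => (hw j).1) hm0 hA]
    have hlog : Real.log m < 0 := Real.log_neg hm0 hm1
    have := mul_pos_of_neg_of_neg (show (n : ℝ) - ∑ j, lam j < 0 by linarith) hlog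
    linarith
  refine ⟨part1, ?_⟩
  intro w θ sigma2 hw hs hmax
  haveI : Nonempty (Fin k) := Fin.pos_iff_nonempty.1 hk
  obtain ⟨j0, -, hj0⟩ := Finset.exists_max_image Finset.univ w Finset.univ_nonempty
  by_cases h1 : w j0 = 1
  · exact ⟨j0, h1⟩
  have hm1 : w j0 < 1 := lt_of_le_of_ne (hw j0).2 h1
  have hm0 : 0 < w j0 := (hw j0).1
  have hstrict := part1 w θ sigma2 (w j0) hw hs (fun j => hj0 j (Finset.mem_univ j)) ⟨j0, rfl⟩ hm1
  have hle := hmax (fun j => w j / w j0) θ sigma2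
    (fun j => ⟨div_pos (hw j).1 hm0, (div_le_one hm0).2 (hj0 j (Finset.mem_univ j))⟩) hs
  linarith
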